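/- Let f : ℝ^d → ℝ^C and h : ℝ^C → ℝ be continuous, let (x_1,y_1),…,(x_n,y_n) ∈ ℝ^d × ℝ^C, and let α, β > 0. Then the Mixup loss satisfies the symmetrization identity (1/n²) Σ_{i,j=1}^n E_{λ∼Beta(α,β)} ℓ(λx_i+(1−λ)x_j, λy_i+(1−λ)y_j) = (1/n) Σ_{i=1}^n E_{λ∼D_λ} [ (1/n) Σ_{j=1}^n ℓ(λx_i+(1−λ)x_j, y_i) ]. -/

import Mathlib

open MeasureTheory
open scoped BigOperators

/-- The Beta function B(a,b) = Γ(a)Γ(b)/Γ(a+b). -/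
noncomputable def betaFun (a b : ℝ) : ℝ := Real.Gamma a * Real.Gamma b / Real.Gamma (a + b)

/-- The Beta(a,b) density l ↦ l^(a−1) (1−l)^(b−1) / B(a,b). -/
noncomputable def betaDensity (a b l : ℝ) : ℝ :=
  l ^ (a - 1) * (1 - l) ^ (b - 1) / betaFun a b

/-- The Beta(a,b) probability measure on [0,1]. -/
noncomputable def betaMeasure (a b : ℝ) : Measure ℝ :=
  (volume.restrict (Set.Icc (0 : ℝ) 1)).withDensity fun l => ENNReal.ofReal (betaDensity a b l)

/-- The mixture D_λ = (a/(a+b))·Beta(a+1,b) + (b/(a+b))·Beta(b+1,a). -/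
noncomputable def mixMeasure (a b : ℝ) : Measure ℝ :=
  ENNReal.ofReal (a / (a + b)) • betaMeasure (a + 1) b
    + ENNReal.ofReal (b / (a + b)) • betaMeasure (b + 1) a

open scoped RealInnerProductSpace

lemma betaFun_pos {a b : ℝ} (ha : 0 < a) (hb : 0 < b) : 0 < betaFun a b :=
  div_pos (mul_pos (Real.Gamma_pos_of_pos ha) (Real.Gamma_pos_of_pos hb))
    (Real.Gamma_pos_of_pos (by linarith))

lemma betaDensity_nonneg {a b : ℝ} (ha : 0 < a) (hb : 0 < b) {l : ℝ}
    (hl : l ∈ Set.Icc (0:ℝ) 1) : 0 ≤ betaDensity a b l :=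
  div_nonneg
    (mul_nonneg (Real.rpow_nonneg hl.1 _) (Real.rpow_nonneg (by linarith [hl.2]) _))
    (betaFun_pos ha hb).le

lemma betaDensity_measurable (a b : ℝ) : Measurable (betaDensity a b) := by
  unfold betaDensity
  exact ((measurable_id.pow_const _).mul
    ((measurable_const.sub measurable_id).pow_const _)).div_const _

lemma intervalIntegrable_betaDensity {a b : ℝ} (ha : 0 < a) (hb : 0 < b) :
    IntervalIntegrable (betaDensity a b) volume 0 1 := by
  have key : ∀ u v : ℝ, 0 < u →
      IntervalIntegrable (fun l => l ^ (u-1) * (1-l) ^ (v-1)) volume 0 (1/2) := by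
    intro u v hu
    refine (intervalIntegral.intervalIntegrable_rpow' (by linarith)).mul_continuousOn ?_
    refine (continuousOn_const.sub continuousOn_id).rpow_const ?_
    intro l hl
    rw [Set.uIcc_of_le (by norm_num)] at hl
    exact Or.inl (ne_of_gt (by nlinarith [hl.1, hl.2] : (0:ℝ) < 1 - l))
  have h1 := key a b ha
  have h2 : IntervalIntegrable (fun l : ℝ => l ^ (a-1) * (1-l) ^ (b-1)) volume (1/2) 1 := by
    have h2' := (key b a hb).comp_sub_left 1
    simp only [sub_zero] at h2'
    have heq : (fun l : ℝ => (1-l) ^ (b-1) * (1-(1-l)) ^ (a-1))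
        = fun l : ℝ => l ^ (a-1) * (1-l) ^ (b-1) := by
      funext l; rw [sub_sub_cancel]; ring
    rw [heq] at h2'
    have : (1:ℝ) - 1/2 = 1/2 := by norm_num
    rw [this] at h2'
    exact h2'.symm
  have h3 := h1.trans h2
  have : betaDensity a b = fun l => (l ^ (a-1) * (1-l) ^ (b-1)) * (betaFun a b)⁻¹ := by
    funext l; rw [betaDensity, div_eq_mul_inv]
  rw [this]
  exact h3.mul_const _

lemma integrableOn_betaDensity_Icc {a b : ℝ} (ha : 0 < a) (hb : 0 < b) :
    IntegrableOn (betaDensity a b) (Set.Icc (0:ℝ) 1) volume := by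
  rw [← intervalIntegrable_iff_integrableOn_Icc_of_le zero_le_one]
  exact intervalIntegrable_betaDensity ha hb

lemma integral_betaMeasure {a b : ℝ} (ha : 0 < a) (hb : 0 < b) (φ : ℝ → ℝ) :
    ∫ l, φ l ∂betaMeasure a b = ∫ l in (0:ℝ)..1, betaDensity a b l * φ l := by
  have hm : Measurable fun l => (betaDensity a b l).toNNReal :=
    (betaDensity_measurable a b).real_toNNReal
  rw [betaMeasure,
    show (fun l => ENNReal.ofReal (betaDensity a b l))
      = (fun l => ((betaDensity a b l).toNNReal : ENNReal)) from rfl,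
    integral_withDensity_eq_integral_smul hm φ,
    intervalIntegral.integral_of_le zero_le_one,
    MeasureTheory.integral_Icc_eq_integral_Ioc]
  refine setIntegral_congr_fun measurableSet_Ioc fun l hl => ?_
  have h0 : 0 ≤ betaDensity a b l := betaDensity_nonneg ha hb ⟨hl.1.le, hl.2⟩
  simp [NNReal.smul_def, smul_eq_mul, Real.coe_toNNReal _ h0]

lemma integrable_betaMeasure {a b : ℝ} (ha : 0 < a) (hb : 0 < b) {φ : ℝ → ℝ}
    (hφ : Continuous φ) : Integrable φ (betaMeasure a b) := by
  have hm : Measurable fun l => (betaDensity a b l).toNNReal :=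
    (betaDensity_measurable a b).real_toNNReal
  rw [betaMeasure,
    show (fun l => ENNReal.ofReal (betaDensity a b l))
      = (fun l => ((betaDensity a b l).toNNReal : ENNReal)) from rfl,
    integrable_withDensity_iff_integrable_smul hm]
  simp only [NNReal.smul_def, smul_eq_mul, Real.coe_toNNReal']
  obtain ⟨M, hM⟩ := (isCompact_Icc (a := (0:ℝ)) (b := 1)).exists_bound_of_continuousOn
    hφ.continuousOn
  refine Integrable.mono' ((integrableOn_betaDensity_Icc ha hb).const_mul M) ?_ ?_
  · exact (((betaDensity_measurable a b).max measurable_const).mul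
      hφ.measurable).aestronglyMeasurable
  · rw [ae_restrict_iff' measurableSet_Icc]
    filter_upwards with l hl
    have h0 : 0 ≤ betaDensity a b l := betaDensity_nonneg ha hb hl
    rw [max_eq_left h0, Real.norm_eq_abs, abs_mul, abs_of_nonneg h0]
    have hφl := hM l hl
    rw [Real.norm_eq_abs] at hφl
    nlinarith [abs_nonneg (φ l)]

lemma betaDensity_mul_self {a b : ℝ} (ha : 0 < a) (hb : 0 < b) {l : ℝ}
    (hl : l ∈ Set.Icc (0:ℝ) 1) :
    betaDensity a b l * l = (a/(a+b)) * betaDensity (a+1) b l := by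
  have hB : betaFun (a+1) b = (a/(a+b)) * betaFun a b := by
    unfold betaFun
    rw [Real.Gamma_add_one (ne_of_gt ha), show a + 1 + b = (a+b) + 1 by ring,
      Real.Gamma_add_one (by positivity)]
    have h1 : Real.Gamma (a+b) ≠ 0 := (Real.Gamma_pos_of_pos (by linarith)).ne'
    have h2 : a + b ≠ 0 := by positivity
    field_simp
  rcases eq_or_lt_of_le hl.1 with h0 | h0
  · rw [betaDensity, betaDensity, ← h0]
    rw [Real.zero_rpow (by linarith : a + 1 - 1 ≠ 0)]
    simp
  · have hla : l ^ (a + 1 - 1) = l ^ (a-1) * l := by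
      rw [show a + 1 - 1 = (a - 1) + 1 by ring, Real.rpow_add_one h0.ne']
    rw [betaDensity, betaDensity, hB, hla]
    have hBab : betaFun a b ≠ 0 := (betaFun_pos ha hb).ne'
    have hq : a/(a+b) ≠ 0 := by positivity
    field_simp

lemma betaDensity_reflect (a b l : ℝ) : betaDensity a b (1 - l) = betaDensity b a l := by
  unfold betaDensity betaFun
  rw [sub_sub_cancel, add_comm b a]
  ring

lemma moment_integral {a b : ℝ} (ha : 0 < a) (hb : 0 < b) (G : ℝ → ℝ) :
    ∫ l in (0:ℝ)..1, betaDensity a b l * (l * G l)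
      = (a/(a+b)) * ∫ l in (0:ℝ)..1, betaDensity (a+1) b l * G l := by
  rw [← intervalIntegral.integral_const_mul]
  refine intervalIntegral.integral_congr fun l hl => ?_
  rw [Set.uIcc_of_le zero_le_one] at hl
  rw [← mul_assoc, betaDensity_mul_self ha hb hl, mul_assoc]

lemma mixup_moment {a b : ℝ} (ha : 0 < a) (hb : 0 < b) {G G' : ℝ → ℝ}
    (hG : Continuous G) (hG' : Continuous G') :
    ∫ l, (l * G l + (1 - l) * G' (1 - l)) ∂betaMeasure a b
      = (a/(a+b)) * (∫ l in (0:ℝ)..1, betaDensity (a+1) b l * G l)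
        + (b/(a+b)) * (∫ l in (0:ℝ)..1, betaDensity (b+1) a l * G' l) := by
  rw [integral_betaMeasure ha hb]
  have hint1 : IntervalIntegrable (fun l => betaDensity a b l * (l * G l)) volume 0 1 :=
    (intervalIntegrable_betaDensity ha hb).mul_continuousOn
      ((continuous_id.mul hG).continuousOn)
  have hint2 : IntervalIntegrable
      (fun l => betaDensity a b l * ((1-l) * G' (1-l))) volume 0 1 :=
    (intervalIntegrable_betaDensity ha hb).mul_continuousOn
      (((continuous_const.sub continuous_id).mul
        (hG'.comp (continuous_const.sub continuous_id))).continuousOn)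
  simp only [mul_add]
  rw [intervalIntegral.integral_add hint1 hint2, moment_integral ha hb G]
  congr 1
  have refl2 : ∫ l in (0:ℝ)..1, betaDensity a b l * ((1-l) * G' (1-l))
      = ∫ l in (0:ℝ)..1, betaDensity b a l * (l * G' l) := by
    have h1 := intervalIntegral.integral_comp_sub_left (a := 0) (b := 1)
      (fun m => betaDensity b a m * (m * G' m)) 1
    simp only [sub_zero, sub_self] at h1
    rw [← h1]
    refine intervalIntegral.integral_congr fun l _ => ?_
    simp only [betaDensity_reflect b a l]
  rw [refl2, moment_integral hb ha G', add_comm b a]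

/-- symmetrization identity for the Mixup loss, with
ℓ(x,y) = h(f(x)) − yᵀ f(x):
(1/n²) Σ_{i,j} E_{λ∼Beta(α,β)} ℓ(λxᵢ+(1−λ)xⱼ, λyᵢ+(1−λ)yⱼ)
  = (1/n) Σᵢ E_{λ∼D_λ} [ (1/n) Σⱼ ℓ(λxᵢ+(1−λ)xⱼ, yᵢ) ]. -/
theorem mixup_symmetrization (d C n : ℕ)
    (f : EuclideanSpace ℝ (Fin d) → EuclideanSpace ℝ (Fin C))
    (h : EuclideanSpace ℝ (Fin C) → ℝ)
    (hf : Continuous f) (hh : Continuous h)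
    (x : Fin n → EuclideanSpace ℝ (Fin d)) (y : Fin n → EuclideanSpace ℝ (Fin C))
    (α β : ℝ) (hα : 0 < α) (hβ : 0 < β) :
    (1 / (n : ℝ) ^ 2) * ∑ i, ∑ j,
        ∫ l, (h (f (l • x i + (1 - l) • x j))
            - ⟪l • y i + (1 - l) • y j, f (l • x i + (1 - l) • x j)⟫) ∂betaMeasure α β
      = (1 / (n : ℝ)) * ∑ i,
          ∫ l, ((1 / (n : ℝ)) * ∑ j,
            (h (f (l • x i + (1 - l) • x j))
              - ⟪y i, f (l • x i + (1 - l) • x j)⟫)) ∂mixMeasure α β := by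
  classical
  set E : Fin n → Fin n → ℝ → ℝ := fun i j l =>
    h (f (l • x i + (1 - l) • x j)) - ⟪y i, f (l • x i + (1 - l) • x j)⟫ with hE
  have hEc : ∀ i j, Continuous (E i j) := by
    intro i j
    have hc : Continuous fun l : ℝ => l • x i + (1 - l) • x j :=
      (continuous_id.smul continuous_const).add
        ((continuous_const.sub continuous_id).smul continuous_const)
    exact (hh.comp (hf.comp hc)).sub (continuous_const.inner (hf.comp hc))
  set A : Fin n → Fin n → ℝ := fun i j =>
    ∫ l in (0:ℝ)..1, betaDensity (α+1) β l * E i j l with hA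
  set B : Fin n → Fin n → ℝ := fun i j =>
    ∫ l in (0:ℝ)..1, betaDensity (β+1) α l * E i j l with hB
  have key : ∀ i j : Fin n,
      (∫ l, (h (f (l • x i + (1 - l) • x j))
          - ⟪l • y i + (1 - l) • y j, f (l • x i + (1 - l) • x j)⟫) ∂betaMeasure α β)
        = (α/(α+β)) * A i j + (β/(α+β)) * B j i := by
    intro i j
    have heq : (fun l : ℝ => h (f (l • x i + (1 - l) • x j))
        - ⟪l • y i + (1 - l) • y j, f (l • x i + (1 - l) • x j)⟫)
        = fun l => l * E i j l + (1 - l) * E j i (1 - l) := by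
      funext l
      simp only [hE, inner_add_left, real_inner_smul_left, sub_sub_cancel]
      rw [show (1 - l) • x j + l • x i = l • x i + (1 - l) • x j from add_comm _ _]
      ring
    rw [heq]
    simp only [hA, hB]
    exact mixup_moment hα hβ (hEc i j) (hEc j i)
  have rkey : ∀ i : Fin n,
      (∫ l, ((1 / (n : ℝ)) * ∑ j,
          (h (f (l • x i + (1 - l) • x j))
            - ⟪y i, f (l • x i + (1 - l) • x j)⟫)) ∂mixMeasure α β)
        = (α/(α+β)) * ((1/(n:ℝ)) * ∑ j, A i j)
          + (β/(α+β)) * ((1/(n:ℝ)) * ∑ j, B i j) := by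
    intro i
    have hφ : Continuous fun l => (1/(n:ℝ)) * ∑ j, E i j l :=
      continuous_const.mul (continuous_finset_sum _ fun j _ => (hEc i j))
    have hmix : ∫ l, ((1/(n:ℝ)) * ∑ j, E i j l) ∂mixMeasure α β
        = (α/(α+β)) * (∫ l in (0:ℝ)..1, betaDensity (α+1) β l * ((1/(n:ℝ)) * ∑ j, E i j l))
          + (β/(α+β)) * (∫ l in (0:ℝ)..1, betaDensity (β+1) α l * ((1/(n:ℝ)) * ∑ j, E i j l)) := by
      rw [mixMeasure]
      have hi1 : Integrable (fun l => (1/(n:ℝ)) * ∑ j, E i j l)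
          (ENNReal.ofReal (α / (α + β)) • betaMeasure (α + 1) β) :=
        (integrable_betaMeasure (by linarith) hβ hφ).smul_measure ENNReal.ofReal_ne_top
      have hi2 : Integrable (fun l => (1/(n:ℝ)) * ∑ j, E i j l)
          (ENNReal.ofReal (β / (α + β)) • betaMeasure (β + 1) α) :=
        (integrable_betaMeasure (by linarith) hα hφ).smul_measure ENNReal.ofReal_ne_top
      rw [integral_add_measure hi1 hi2, integral_smul_measure, integral_smul_measure,
        ENNReal.toReal_ofReal (by positivity), ENNReal.toReal_ofReal (by positivity),
        integral_betaMeasure (by linarith) hβ, integral_betaMeasure (by linarith) hα]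
      simp [smul_eq_mul]
    have pull : ∀ (a b : ℝ), 0 < a → 0 < b →
        ∫ l in (0:ℝ)..1, betaDensity a b l * ((1/(n:ℝ)) * ∑ j, E i j l)
          = (1/(n:ℝ)) * ∑ j, ∫ l in (0:ℝ)..1, betaDensity a b l * E i j l := by
      intro a b ha hb
      have : (fun l => betaDensity a b l * ((1/(n:ℝ)) * ∑ j, E i j l))
          = fun l => (1/(n:ℝ)) * ∑ j, betaDensity a b l * E i j l := by
        funext l
        rw [← mul_assoc, mul_comm (betaDensity a b l) (1/(n:ℝ)), mul_assoc,
          Finset.mul_sum]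
      rw [this, intervalIntegral.integral_const_mul,
        intervalIntegral.integral_finset_sum (fun j _ =>
          (intervalIntegrable_betaDensity ha hb).mul_continuousOn (hEc i j).continuousOn)]
    have hfold : (fun l : ℝ => (1 / (n : ℝ)) * ∑ j,
        (h (f (l • x i + (1 - l) • x j)) - ⟪y i, f (l • x i + (1 - l) • x j)⟫))
        = fun l => (1/(n:ℝ)) * ∑ j, E i j l := by
      funext l; simp only [hE]
    rw [hfold, hmix, pull (α+1) β (by linarith) hβ, pull (β+1) α (by linarith) hα]
  simp only [key, rkey]
  have hswap : ∑ i : Fin n, ∑ j : Fin n, B j i = ∑ i : Fin n, ∑ j : Fin n, B i j :=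
    Finset.sum_comm
  simp only [Finset.sum_add_distrib, ← Finset.mul_sum]
  rw [hswap]
  ring
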